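/- Fix t ∈ ℝ and suppose A(a; θ(t)) ≠ 0 for every a ∈ A; let n₊ = |{a ∈ A : A(a; θ(t)) > 0}|. If θ : ℝ → ℝ^A is differentiable at t and satisfies the RPG dynamics θ̇_b(t) = n₊ · π(b; θ(t)) · A(b; θ(t)) for all b ∈ A, then the induced policy trajectory satisfies d/dt π(a; θ(t)) = n₊ · π(a; θ(t)) · (π(a; θ(t)) A(a; θ(t)) − ∑_{b∈A} π(b; θ(t))² A(b; θ(t))) for every a ∈ A. -/

import Mathlib

/-- The softmax policy `π(a; θ) = exp θ_a / ∑_b exp θ_b`. -/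
noncomputable def softmax {A : Type*} [Fintype A] (θ : A → ℝ) (a : A) : ℝ :=
  Real.exp (θ a) / ∑ b, Real.exp (θ b)

/-- fix `t` and suppose the advantage `A(a; θ(t)) = q a − ∑_c π(c; θ(t)) q c`
is nonzero for every `a`; let `n₊ = |{a : A(a; θ(t)) > 0}|`. If `θ : ℝ → ℝ^A` is
differentiable at `t` and satisfies the RPG dynamics
`θ̇_b(t) = n₊ · π(b; θ(t)) A(b; θ(t))` for all `b`, then
`d/dt π(a; θ(t)) = n₊ · π(a; θ(t)) (π(a; θ(t)) A(a; θ(t)) − ∑_b π(b; θ(t))² A(b; θ(t)))`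
for every `a`. -/
theorem stmt12 {A : Type*} [Fintype A] [Nonempty A]
    (q : A → ℝ) (θ : ℝ → A → ℝ) (θdot : A → ℝ) (t : ℝ) (n : ℕ)
    (hadv : ∀ a : A, q a - ∑ c, softmax (θ t) c * q c ≠ 0)
    (hn : n = Nat.card {a : A // 0 < q a - ∑ c, softmax (θ t) c * q c})
    (hθ : HasDerivAt θ θdot t)
    (hdyn : ∀ b : A,
      θdot b = (n : ℝ) * (softmax (θ t) b * (q b - ∑ c, softmax (θ t) c * q c))) :
    ∀ a : A,
      HasDerivAt (fun s => softmax (θ s) a)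
        ((n : ℝ) * (softmax (θ t) a *
          (softmax (θ t) a * (q a - ∑ c, softmax (θ t) c * q c) -
            ∑ b, (softmax (θ t) b) ^ 2 * (q b - ∑ c, softmax (θ t) c * q c)))) t := by
  intro a
  have hSpos : 0 < ∑ b, Real.exp (θ t b) :=
    Finset.sum_pos (fun b _ => Real.exp_pos _) Finset.univ_nonempty
  have hSne : (∑ b, Real.exp (θ t b)) ≠ 0 := ne_of_gt hSpos
  have hcoord : ∀ b : A, HasDerivAt (fun s => θ s b) (θdot b) t := fun b =>
    (ContinuousLinearMap.proj b : (A → ℝ) →L[ℝ] ℝ).hasFDerivAt.comp_hasDerivAt t hθ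
  have hf : ∀ b : A, HasDerivAt (fun s => Real.exp (θ s b)) (Real.exp (θ t b) * θdot b) t :=
    fun b => by simpa [mul_comm] using (hcoord b).exp
  have hg : HasDerivAt (fun s => ∑ b, Real.exp (θ s b)) (∑ b, Real.exp (θ t b) * θdot b) t :=
    HasDerivAt.fun_sum (fun b _ => hf b)
  have h := (hf a).div hg hSne
  have heq : ((n : ℝ) * (softmax (θ t) a *
      (softmax (θ t) a * (q a - ∑ c, softmax (θ t) c * q c) -
        ∑ b, (softmax (θ t) b) ^ 2 * (q b - ∑ c, softmax (θ t) c * q c)))) =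
      (Real.exp (θ t a) * θdot a * (∑ b, Real.exp (θ t b)) -
        Real.exp (θ t a) * ∑ b, Real.exp (θ t b) * θdot b) /
        (∑ b, Real.exp (θ t b)) ^ 2 := by
    set S := ∑ b, Real.exp (θ t b) with hS
    set V := ∑ c, softmax (θ t) c * q c with hV
    have hsum1 : ∑ b, Real.exp (θ t b) * θdot b =
        (n : ℝ) / S * ∑ b, Real.exp (θ t b) ^ 2 * (q b - V) := by
      rw [Finset.mul_sum]
      refine Finset.sum_congr rfl fun b _ => ?_
      rw [hdyn b]
      simp only [softmax, ← hS, ← hV]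
      field_simp
    have hsum2 : ∑ b, (softmax (θ t) b) ^ 2 * (q b - V) =
        (∑ b, Real.exp (θ t b) ^ 2 * (q b - V)) / S ^ 2 := by
      rw [Finset.sum_div]
      refine Finset.sum_congr rfl fun b _ => ?_
      simp only [softmax, ← hS]
      field_simp
    rw [hdyn a, hsum1, hsum2]
    simp only [softmax, ← hS, ← hV]
    field_simp
  rw [heq]
  exact h
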